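/- Let 0 < p < 1, q = 1 − p, let μ_n be binomially distributed with parameters n and p, and let (m_n) be a sequence of integers with 0 ≤ m_n ≤ n such that (m_n − np)/√(npq) → x for some fixed real x as n → ∞. Then √(2πnpq) · P(μ_n = m_n) → exp(−x²/2) as n → ∞. -/

import Mathlib

open Filter Real

lemma log_taylor2 {y : ℝ} (hy : |y| ≤ 1/2) :
    |Real.log (1+y) - y + y^2/2| ≤ 2 * |y|^3 := by
  have h : |(-y)| < 1 := by rw [abs_neg]; linarith [abs_nonneg y]
  have H := Real.abs_log_sub_add_sum_range_le h 2
  have e1 : (∑ i ∈ Finset.range 2, (-y) ^ (i + 1) / (i + 1)) = -y + y^2/2 := by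
    simp [Finset.sum_range_succ]; ring
  rw [e1] at H
  have e2 : (1 : ℝ) - -y = 1 + y := by ring
  rw [e2, abs_neg] at H
  have h3 : |y|^3 / (1 - |y|) ≤ 2 * |y|^3 := by
    rw [div_le_iff₀ (by linarith [abs_nonneg y])]
    nlinarith [pow_nonneg (abs_nonneg y) 3]
  calc |Real.log (1+y) - y + y^2/2| = |(-y + y^2/2) + Real.log (1+y)| := by ring_nf
    _ ≤ |y|^(2+1) / (1 - |y|) := H
    _ ≤ 2 * |y|^3 := h3

lemma phi_taylor {y : ℝ} (hy : |y| ≤ 1/2) :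
    |(1+y) * Real.log (1+y) - y - y^2/2| ≤ 4 * |y|^3 := by
  have h1 := log_taylor2 hy
  have key : (1+y) * Real.log (1+y) - y - y^2/2
      = (1+y) * (Real.log (1+y) - y + y^2/2) - y^3/2 := by ring
  rw [key]
  have h2 : |(1+y) * (Real.log (1+y) - y + y^2/2)| ≤ (3/2) * (2 * |y|^3) := by
    rw [abs_mul]
    have hb : |1 + y| ≤ 3/2 := by
      have := abs_le.mp hy; rw [abs_le]; constructor <;> linarith
    exact mul_le_mul hb h1 (abs_nonneg _) (by norm_num)
  have h3 : |y^3/2| ≤ |y|^3/2 := by rw [abs_div, abs_pow]; norm_num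
  calc |(1+y) * (Real.log (1+y) - y + y^2/2) - y^3/2|
      ≤ |(1+y) * (Real.log (1+y) - y + y^2/2)| + |y^3/2| := abs_sub _ _
    _ ≤ (3/2) * (2 * |y|^3) + |y|^3/2 := add_le_add h2 h3
    _ ≤ 4 * |y|^3 := by nlinarith [pow_nonneg (abs_nonneg y) 3]

lemma stirling_pos {j : ℕ} (hj : j ≠ 0) : 0 < Stirling.stirlingSeq j := by
  obtain ⟨i, rfl⟩ := Nat.exists_eq_succ_of_ne_zero hj
  exact Stirling.stirlingSeq'_pos i

lemma fact_eq_stirling {j : ℕ} (hj : j ≠ 0) :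
    (j.factorial : ℝ) = Stirling.stirlingSeq j * (Real.sqrt (2*j) * ((j:ℝ)/Real.exp 1)^j) := by
  have hj' : 0 < (j:ℝ) := by positivity
  have hd : Real.sqrt (2*j) * ((j:ℝ)/Real.exp 1)^j ≠ 0 :=
    ne_of_gt (mul_pos (Real.sqrt_pos.mpr (by positivity)) (pow_pos (by positivity) j))
  rw [Stirling.stirlingSeq, div_mul_cancel₀ _ hd]

lemma factor_eq (p q : ℝ) (hp : 0 < p) (hq : 0 < q) {n mm : ℕ} (h1 : 1 ≤ mm) (h2 : mm < n) :
    Real.sqrt (2 * Real.pi * n * p * q) * ((n.choose mm : ℝ) * p ^ mm * q ^ (n - mm)) =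
    (Stirling.stirlingSeq n / (Stirling.stirlingSeq mm * Stirling.stirlingSeq (n - mm))) *
    Real.sqrt (Real.pi * ((n:ℝ) * p / mm) * ((n:ℝ) * q / ((n:ℝ) - mm))) *
    (((n:ℝ) * p / mm) ^ mm * ((n:ℝ) * q / ((n:ℝ) - mm)) ^ (n - mm)) := by
  set kk := n - mm with hkk
  have hkk1 : kk ≠ 0 := Nat.sub_ne_zero_of_lt h2
  have hmm : mm ≠ 0 := by omega
  have hnn : n ≠ 0 := by omega
  have hK : ((kk:ℝ)) = (n:ℝ) - mm := by
    rw [hkk, Nat.cast_sub h2.le]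
  have hNpos : 0 < (n:ℝ) := by positivity
  have hMpos : 0 < (mm:ℝ) := by exact_mod_cast Nat.pos_of_ne_zero hmm
  have hKpos : 0 < (kk:ℝ) := by exact_mod_cast Nat.pos_of_ne_zero hkk1
  have hKpos' : 0 < (n:ℝ) - mm := hK ▸ hKpos
  have hs1 := stirling_pos hnn
  have hs2 := stirling_pos hmm
  have hs3 := stirling_pos hkk1
  have he : (0:ℝ) < Real.exp 1 := Real.exp_pos 1
  -- rewrite K everywhere as (n:ℝ) - mm via hK later; work with K := (n:ℝ) - mm
  rw [← hK]
  -- sqrt identity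
  have sqrt_eq : Real.sqrt (2*Real.pi*n*p*q) * Real.sqrt (2*n) =
      Real.sqrt (Real.pi * ((n:ℝ)*p/mm) * ((n:ℝ)*q/kk)) * (Real.sqrt (2*mm) * Real.sqrt (2*kk)) := by
    rw [← Real.sqrt_mul (by positivity), ← Real.sqrt_mul (by positivity),
      ← Real.sqrt_mul (by positivity)]
    congr 1
    field_simp
  have hn_eq : n = mm + kk := by omega
  have b1 : ((n:ℝ)/Real.exp 1) * p = ((n:ℝ)*p/mm) * ((mm:ℝ)/Real.exp 1) := by
    field_simp
  have b2 : ((n:ℝ)/Real.exp 1) * q = ((n:ℝ)*q/kk) * ((kk:ℝ)/Real.exp 1) := by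
    field_simp
  have pow_eq : ((n:ℝ)/Real.exp 1)^n * (p^mm * q^kk) =
      (((n:ℝ)*p/mm)^mm * ((n:ℝ)*q/kk)^kk) * (((mm:ℝ)/Real.exp 1)^mm * ((kk:ℝ)/Real.exp 1)^kk) := by
    calc ((n:ℝ)/Real.exp 1)^n * (p^mm * q^kk)
        = (((n:ℝ)/Real.exp 1) * p)^mm * (((n:ℝ)/Real.exp 1) * q)^kk := by
          rw [hn_eq, pow_add, mul_pow, mul_pow]; ring
      _ = _ := by rw [b1, b2, mul_pow, mul_pow]; ring
  -- assemble
  rw [Nat.cast_choose ℝ h2.le, fact_eq_stirling hnn, fact_eq_stirling hmm, fact_eq_stirling hkk1]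
  have hsq2 : (0:ℝ) < Real.sqrt (2*mm) := Real.sqrt_pos.mpr (by positivity)
  have hsq3 : (0:ℝ) < Real.sqrt (2*kk) := Real.sqrt_pos.mpr (by positivity)
  have hp2 : (0:ℝ) < ((mm:ℝ)/Real.exp 1)^mm := pow_pos (by positivity) mm
  have hp3 : (0:ℝ) < ((kk:ℝ)/Real.exp 1)^kk := pow_pos (by positivity) kk
  have step : Real.sqrt (2*Real.pi*n*p*q) *
      (Stirling.stirlingSeq n * (Real.sqrt (2*n) * ((n:ℝ)/Real.exp 1)^n) /
        (Stirling.stirlingSeq mm * (Real.sqrt (2*mm) * ((mm:ℝ)/Real.exp 1)^mm) *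
          (Stirling.stirlingSeq kk * (Real.sqrt (2*kk) * ((kk:ℝ)/Real.exp 1)^kk))) *
        p^mm * q^kk) =
      (Stirling.stirlingSeq n / (Stirling.stirlingSeq mm * Stirling.stirlingSeq kk)) *
      ((Real.sqrt (2*Real.pi*n*p*q) * Real.sqrt (2*n)) / (Real.sqrt (2*mm) * Real.sqrt (2*kk))) *
      ((((n:ℝ)/Real.exp 1)^n * (p^mm * q^kk)) / (((mm:ℝ)/Real.exp 1)^mm * ((kk:ℝ)/Real.exp 1)^kk)) := by
    field_simp
  rw [step, sqrt_eq, pow_eq]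
  rw [mul_div_assoc ((Real.sqrt (Real.pi * ((n:ℝ)*p/mm) * ((n:ℝ)*q/kk)))) _ _,
    div_self (by positivity : (Real.sqrt (2*(mm:ℝ)) * Real.sqrt (2*(kk:ℝ))) ≠ 0), mul_one,
    mul_div_assoc ((((n:ℝ)*p/mm)^mm * ((n:ℝ)*q/kk)^kk)) _ _,
    div_self (by positivity : (((mm:ℝ)/Real.exp 1)^mm * ((kk:ℝ)/Real.exp 1)^kk) ≠ 0), mul_one]

/-- **The local De Moivre–Laplace limit theorem**: let `0 < p < 1`, `q = 1 - p`, let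
`μₙ` be binomially distributed with parameters `n` and `p`
(`P(μₙ = k) = C(n,k) pᵏ qⁿ⁻ᵏ`), and let `(mₙ)` be a sequence of integers with
`0 ≤ mₙ ≤ n` such that `(mₙ − np)/√(npq) → x` for a fixed real `x`. Then
`√(2πnpq) · P(μₙ = mₙ) → exp(−x²/2)` as `n → ∞`. -/
theorem deMoivre_laplace_local_limit_theorem
    (p : ℝ) (hp0 : 0 < p) (hp1 : p < 1)
    (m : ℕ → ℕ) (hm : ∀ n, m n ≤ n) (x : ℝ)
    (hx : Tendsto (fun n : ℕ => ((m n : ℝ) - n * p) / Real.sqrt (n * p * (1 - p)))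
      atTop (nhds x)) :
    Tendsto
      (fun n : ℕ => Real.sqrt (2 * Real.pi * n * p * (1 - p)) *
        ((n.choose (m n) : ℝ) * p ^ (m n) * (1 - p) ^ (n - m n)))
      atTop (nhds (Real.exp (-x ^ 2 / 2))) := by
  set q : ℝ := 1 - p with hq
  have hq0 : 0 < q := by rw [hq]; linarith
  set d : ℕ → ℝ := fun n => (m n : ℝ) - n * p with hd
  set σ : ℕ → ℝ := fun n => Real.sqrt (n * p * q) with hσ
  set t : ℕ → ℝ := fun n => d n / σ n with ht
  have hxt : Tendsto t atTop (nhds x) := hx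
  have hN : Tendsto (fun n : ℕ => (n:ℝ)) atTop atTop := tendsto_natCast_atTop_atTop
  have hev1 : ∀ᶠ n : ℕ in atTop, 1 ≤ n := eventually_ge_atTop 1
  set w : ℕ → ℝ := fun n => σ n / n with hw_def
  have hw : Tendsto w atTop (nhds 0) := by
    have h0 : Tendsto (fun n : ℕ => Real.sqrt (p * q / n)) atTop (nhds 0) := by
      have := (tendsto_const_div_atTop_nhds_zero_nat (p * q)).sqrt
      rwa [Real.sqrt_zero] at this
    apply h0.congr'
    filter_upwards [hev1] with n hn
    have hn' : (0:ℝ) < n := by exact_mod_cast hn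
    have e1 : p * q / n = (n * p * q) / (n:ℝ)^2 := by field_simp
    show Real.sqrt (p * q / n) = σ n / n
    rw [e1, Real.sqrt_div (by positivity), Real.sqrt_sq hn'.le, hσ]
  have hdn : Tendsto (fun n => d n / n) atTop (nhds 0) := by
    have h0 := hxt.mul hw
    rw [mul_zero] at h0
    apply h0.congr'
    filter_upwards [hev1] with n hn
    have hn' : (0:ℝ) < n := by exact_mod_cast hn
    have hσpos : 0 < σ n := Real.sqrt_pos.mpr (by positivity)
    show t n * w n = d n / n
    rw [ht, hw_def]
    field_simp
  have hmn : Tendsto (fun n => (m n : ℝ) / n) atTop (nhds p) := by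
    have h0 := hdn.add (tendsto_const_nhds (x := p))
    rw [zero_add] at h0
    apply h0.congr'
    filter_upwards [hev1] with n hn
    have hn' : (0:ℝ) < n := by exact_mod_cast hn
    show d n / n + p = (m n : ℝ) / n
    rw [hd]
    field_simp
    ring
  have hev2 : ∀ᶠ n : ℕ in atTop, p / 2 < (m n : ℝ) / n := hmn.eventually_const_lt (by linarith)
  have hev3 : ∀ᶠ n : ℕ in atTop, (m n : ℝ) / n < p + q / 2 :=
    hmn.eventually_lt_const (by rw [hq]; linarith)
  have hev_m1 : ∀ᶠ n : ℕ in atTop, 1 ≤ m n := by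
    filter_upwards [hev1, hev2] with n h1 h2
    have hn' : (0:ℝ) < n := by exact_mod_cast h1
    rcases Nat.eq_zero_or_pos (m n) with h | h
    · rw [h] at h2; simp at h2; nlinarith
    · exact h
  have hev_mn : ∀ᶠ n : ℕ in atTop, m n < n := by
    filter_upwards [hev1, hev3] with n h1 h3
    have hn' : (0:ℝ) < n := by exact_mod_cast h1
    by_contra h
    have heq : m n = n := le_antisymm (hm n) (not_lt.mp h)
    rw [heq, div_self hn'.ne'] at h3
    rw [hq] at h3; linarith
  have hm_top : Tendsto m atTop atTop := by
    rw [← tendsto_natCast_atTop_iff (R := ℝ)]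
    apply tendsto_atTop_mono' _ _ (Tendsto.const_mul_atTop (half_pos hp0) hN)
    filter_upwards [hev1, hev2] with n h1 h2
    have hn' : (0:ℝ) < n := by exact_mod_cast h1
    have := (lt_div_iff₀ hn').mp h2
    linarith
  have hk_top : Tendsto (fun n => n - m n) atTop atTop := by
    rw [← tendsto_natCast_atTop_iff (R := ℝ)]
    apply tendsto_atTop_mono' _ _ (Tendsto.const_mul_atTop (half_pos hq0) hN)
    filter_upwards [hev1, hev3] with n h1 h3
    have hn' : (0:ℝ) < n := by exact_mod_cast h1
    rw [Nat.cast_sub (hm n)]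
    have := (div_lt_iff₀ hn').mp h3
    nlinarith
  have hπ : (0:ℝ) < Real.sqrt Real.pi := Real.sqrt_pos.mpr Real.pi_pos
  have hSt := Stirling.tendsto_stirlingSeq_sqrt_pi
  have hR : Tendsto (fun n => Stirling.stirlingSeq n /
      (Stirling.stirlingSeq (m n) * Stirling.stirlingSeq (n - m n))) atTop
      (nhds (Real.sqrt Real.pi / (Real.sqrt Real.pi * Real.sqrt Real.pi))) :=
    hSt.div ((hSt.comp hm_top).mul (hSt.comp hk_top)) (by positivity)
  set a : ℕ → ℝ := fun n => (n:ℝ) * p / (m n) with ha_def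
  set b : ℕ → ℝ := fun n => (n:ℝ) * q / ((n:ℝ) - m n) with hb_def
  have ha : Tendsto a atTop (nhds 1) := by
    have h0 := (tendsto_const_nhds (x := p)).div hmn hp0.ne'
    rw [div_self hp0.ne'] at h0
    apply h0.congr'
    filter_upwards [hev1, hev_m1] with n h1 h2
    have hn' : (0:ℝ) < n := by exact_mod_cast h1
    have hm' : (0:ℝ) < (m n : ℝ) := by exact_mod_cast h2
    show p / ((m n:ℝ) / n) = a n
    rw [ha_def]
    field_simp
  have hb : Tendsto b atTop (nhds 1) := by
    have h2 : Tendsto (fun n => 1 - (m n:ℝ)/n) atTop (nhds q) := by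
      have h3 := (tendsto_const_nhds (x := (1:ℝ))).sub hmn
      rwa [hq]
    have h0 := (tendsto_const_nhds (x := q)).div h2 hq0.ne'
    rw [div_self hq0.ne'] at h0
    apply h0.congr'
    filter_upwards [hev1, hev_mn] with n h1 h2
    have hn' : (0:ℝ) < n := by exact_mod_cast h1
    have hk' : (0:ℝ) < (n:ℝ) - m n := by
      have : (m n : ℝ) < n := by exact_mod_cast h2
      linarith
    show q / (1 - (m n:ℝ)/n) = b n
    rw [hb_def]
    rw [show 1 - (m n:ℝ)/n = ((n:ℝ) - m n)/n by field_simp]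
    rw [div_div_eq_mul_div]
    ring
  have hS : Tendsto (fun n => Real.sqrt (Real.pi * a n * b n)) atTop
      (nhds (Real.sqrt Real.pi)) := by
    have h0 := ((tendsto_const_nhds (x := Real.pi)).mul ha).mul hb
    rw [mul_one, mul_one] at h0
    exact h0.sqrt
  set L : ℕ → ℝ := fun n => (m n : ℝ) * Real.log (a n) + ((n:ℝ) - m n) * Real.log (b n)
    with hL_def
  have hL : Tendsto L atTop (nhds (-x^2/2)) := by
    set u : ℕ → ℝ := fun n => d n / ((n:ℝ) * p) with hu_def
    set v : ℕ → ℝ := fun n => d n / ((n:ℝ) * q) with hv_def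
    have hu : Tendsto u atTop (nhds 0) := by
      have h0 := hdn.div_const p
      rw [zero_div] at h0
      apply h0.congr
      intro n
      show d n / n / p = u n
      rw [hu_def, div_div]
    have hv : Tendsto v atTop (nhds 0) := by
      have h0 := hdn.div_const q
      rw [zero_div] at h0
      apply h0.congr
      intro n
      show d n / n / q = v n
      rw [hv_def, div_div]
    have hu_small : ∀ᶠ n : ℕ in atTop, |u n| ≤ 1/2 := by
      have h0 := NormedAddCommGroup.tendsto_nhds_zero.mp hu (1/2) (by norm_num)
      filter_upwards [h0] with n hn
      rw [Real.norm_eq_abs] at hn; linarith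
    have hv_small : ∀ᶠ n : ℕ in atTop, |v n| ≤ 1/2 := by
      have h0 := NormedAddCommGroup.tendsto_nhds_zero.mp hv (1/2) (by norm_num)
      filter_upwards [h0] with n hn
      rw [Real.norm_eq_abs] at hn; linarith
    set C : ℝ := (4/p^2 + 4/q^2) * (p*q) with hC_def
    have herr_bound : ∀ᶠ n : ℕ in atTop,
        |L n + (t n)^2/2| ≤ C * (|t n|^3 * w n) := by
      filter_upwards [hev1, hev_m1, hev_mn, hu_small, hv_small] with n h1 hm1 hmn' hus hvs
      have hn' : (0:ℝ) < n := by exact_mod_cast h1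
      have hM' : (0:ℝ) < (m n : ℝ) := by exact_mod_cast hm1
      have hK' : (0:ℝ) < (n:ℝ) - m n := by
        have : (m n : ℝ) < n := by exact_mod_cast hmn'
        linarith
      have hσpos : 0 < σ n := Real.sqrt_pos.mpr (by positivity)
      have hσ2 : (σ n)^2 = (n:ℝ)*p*q := by rw [hσ]; exact Real.sq_sqrt (by positivity)
      have ht2 : (t n)^2 = (d n)^2 / ((n:ℝ)*p*q) := by
        rw [ht]
        show (d n / σ n)^2 = _
        rw [div_pow, hσ2]
      have hMD : (m n : ℝ) = (n:ℝ)*p + d n := by rw [hd]; ring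
      have hu1 : u n = d n / ((n:ℝ)*p) := rfl
      have hv1 : v n = d n / ((n:ℝ)*q) := rfl
      have h1u : 1 + u n = (m n : ℝ) / ((n:ℝ)*p) := by
        rw [hu1, hd]; field_simp; ring
      have h1v : (1:ℝ) + -(v n) = ((n:ℝ) - m n) / ((n:ℝ)*q) := by
        rw [hv1, hd, hq]; field_simp [show (1:ℝ) - p ≠ 0 by linarith]; ring
      have hloga : Real.log (a n) = - Real.log (1 + u n) := by
        rw [ha_def, h1u, ← Real.log_inv, inv_div]
      have hlogb : Real.log (b n) = - Real.log (1 + -(v n)) := by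
        rw [hb_def, h1v, ← Real.log_inv, inv_div]
      have key : L n + (t n)^2/2 =
          -(((n:ℝ)*p) * ((1 + u n) * Real.log (1 + u n) - u n - (u n)^2/2))
          - (((n:ℝ)*q) * ((1 + -(v n)) * Real.log (1 + -(v n)) - (-(v n)) - (-(v n))^2/2)) := by
        have hLn : L n = (m n : ℝ) * Real.log (a n) + ((n:ℝ) - m n) * Real.log (b n) := rfl
        rw [hLn, hloga, hlogb, ht2]
        set lu := Real.log (1 + u n) with hlu
        set lv := Real.log (1 + -(v n)) with hlv
        rw [hu1, hv1, hMD, hq]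
        have hne1 : (n:ℝ)*p ≠ 0 := by positivity
        have hne2 : (n:ℝ)*(1-p) ≠ 0 := by positivity
        have hne3 : (1:ℝ) - p ≠ 0 := by linarith
        field_simp
        ring
      rw [key]
      have hb1 : |(1 + u n) * Real.log (1 + u n) - u n - (u n)^2/2| ≤ 4 * |u n|^3 :=
        phi_taylor hus
      have hb2 : |(1 + -(v n)) * Real.log (1 + -(v n)) - (-(v n)) - (-(v n))^2/2|
          ≤ 4 * |(-(v n))|^3 := phi_taylor (by rw [abs_neg]; exact hvs)
      rw [abs_neg] at hb2
      have htabs : |t n| = |d n| / σ n := by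
        rw [ht]
        show |d n / σ n| = _
        rw [abs_div, abs_of_pos hσpos]
      have hwn : w n = σ n / n := rfl
      have habsu : |u n| = |d n| / ((n:ℝ)*p) := by
        rw [hu1, abs_div, abs_of_pos (by positivity : (0:ℝ) < (n:ℝ)*p)]
      have habsv : |v n| = |d n| / ((n:ℝ)*q) := by
        rw [hv1, abs_div, abs_of_pos (by positivity : (0:ℝ) < (n:ℝ)*q)]
      have hrhs : C * (|t n|^3 * w n) = C * (|d n|^3 / (((n:ℝ)*p*q) * n)) := by
        rw [htabs, hwn, div_pow]
        rw [show (σ n)^3 = (σ n)^2 * σ n by ring, hσ2]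
        field_simp
      rw [hrhs]
      set A := ((n:ℝ)*p) * ((1 + u n) * Real.log (1 + u n) - u n - (u n)^2/2) with hA
      set B := ((n:ℝ)*q) * ((1 + -(v n)) * Real.log (1 + -(v n)) - (-(v n)) - (-(v n))^2/2) with hB
      calc |-A - B| ≤ |A| + |B| := by
            rw [show -A - B = -(A + B) by ring, abs_neg]
            exact abs_add_le _ _
        _ ≤ ((n:ℝ)*p) * (4*|u n|^3) + ((n:ℝ)*q) * (4*|v n|^3) := by
            have pos1 : (0:ℝ) < (n:ℝ)*p := by positivity
            have pos2 : (0:ℝ) < (n:ℝ)*q := by positivity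
            apply add_le_add
            · rw [hA, abs_mul, abs_of_pos pos1]
              exact mul_le_mul_of_nonneg_left hb1 pos1.le
            · rw [hB, abs_mul, abs_of_pos pos2]
              exact mul_le_mul_of_nonneg_left hb2 pos2.le
        _ = C * (|d n|^3 / (((n:ℝ)*p*q) * n)) := by
            rw [habsu, habsv, hC_def, div_pow, div_pow]
            field_simp
    have ht3 : Tendsto (fun n => |t n|^3) atTop (nhds (|x|^3)) := (hxt.abs).pow 3
    have hg0 : Tendsto (fun n => C * (|t n|^3 * w n)) atTop (nhds 0) := by
      have h0 := (tendsto_const_nhds (x := C)).mul (ht3.mul hw)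
      rwa [mul_zero, mul_zero] at h0
    have herr : Tendsto (fun n => L n + (t n)^2/2) atTop (nhds 0) := by
      apply squeeze_zero_norm' _ hg0
      filter_upwards [herr_bound] with n hn
      rwa [Real.norm_eq_abs]
    have ht22 : Tendsto (fun n => (t n)^2/2) atTop (nhds (x^2/2)) :=
      (hxt.pow 2).div_const 2
    have h0 := herr.sub ht22
    rw [zero_sub] at h0
    have : -(x^2/2) = -x^2/2 := by ring
    rw [this] at h0
    apply h0.congr
    intro n
    ring
  have hexp : Tendsto (fun n => Real.exp (L n)) atTop (nhds (Real.exp (-x^2/2))) :=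
    (Real.continuous_exp.tendsto _).comp hL
  have hfinal := (hR.mul hS).mul hexp
  have hval : Real.sqrt Real.pi / (Real.sqrt Real.pi * Real.sqrt Real.pi) * Real.sqrt Real.pi *
      Real.exp (-x^2/2) = Real.exp (-x^2/2) := by
    field_simp
  rw [hval] at hfinal
  apply hfinal.congr'
  filter_upwards [hev1, hev_m1, hev_mn] with n h1 hm1 hmn'
  have hn' : (0:ℝ) < n := by exact_mod_cast h1
  have hK : ((n - m n : ℕ) : ℝ) = (n:ℝ) - m n := Nat.cast_sub (hm n)
  have hM' : (0:ℝ) < (m n : ℝ) := by exact_mod_cast hm1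
  have hK' : (0:ℝ) < (n:ℝ) - m n := by
    have : (m n : ℝ) < n := by exact_mod_cast hmn'
    linarith
  have ha_pos : 0 < a n := by
    rw [ha_def]
    show 0 < (n:ℝ) * p / (m n)
    positivity
  have hb_pos : 0 < b n := by
    rw [hb_def]
    show 0 < (n:ℝ) * q / ((n:ℝ) - m n)
    positivity
  have hexpL : Real.exp (L n) = (a n) ^ (m n) * (b n) ^ (n - m n) := by
    have hLn : L n = (m n : ℝ) * Real.log (a n) + ((n - m n : ℕ):ℝ) * Real.log (b n) := by
      rw [hK]
    rw [hLn, Real.exp_add, Real.exp_nat_mul, Real.exp_nat_mul,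
      Real.exp_log ha_pos, Real.exp_log hb_pos]
  show Stirling.stirlingSeq n / (Stirling.stirlingSeq (m n) * Stirling.stirlingSeq (n - m n)) *
      Real.sqrt (Real.pi * a n * b n) * Real.exp (L n) = _
  rw [hexpL]
  exact (factor_eq p q hp0 hq0 hm1 hmn').symm
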